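/- Let k ≥ 2, L > 0, M > 0, let α₀, a₂, …, a_k, b₁ be nonnegative reals and a₁ > 0 with 4α₀a₁ = b₁² and b₁ - 2a₁L > 0. Define ψ(x) = α₀ + Σ_{i=1}^k a_i x_i² + b₁ x₁ and φ₀ = √ψ on [-L,L]^k (where ψ > 0). Then for every x ∈ [-L,L]^k and every 2 ≤ i ≤ k, |∂φ₀/∂x₁(x) · ∂φ₀/∂x_i(x)| = a_i |x_i| (2a₁x₁ + b₁) / (2ψ(x)) ≤ √(a₁ a_i)/2. In particular, if √(a₁)√(a_i) ≤ 2M for all 2 ≤ i ≤ k, then |∂φ₀/∂x₁(x) · ∂φ₀/∂x_i(x)| ≤ M on [-L,L]^k. -/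

import Mathlib

set_option maxHeartbeats 800000


open Finset Set

/-- for `φ₀ = √ψ` with `4α₀a₁ = b₁²` and `b₁ - 2a₁L > 0`, on `[-L,L]^k` and for
`2 ≤ i ≤ k` one has `|∂φ₀/∂x₁ · ∂φ₀/∂xᵢ| = aᵢ|xᵢ|(2a₁x₁+b₁)/(2ψ(x)) ≤ √(a₁aᵢ)/2`; in
particular it is `≤ M` whenever `√a₁ √aᵢ ≤ 2M` for all such `i` (0-based indices). -/
theorem product_partials_bound (k : ℕ) (hk : 2 ≤ k) (L M : ℝ) (hL : 0 < L) (hM : 0 < M)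
    (α₀ b₁ : ℝ) (a : Fin k → ℝ)
    (hα₀ : 0 ≤ α₀) (hb₁ : 0 ≤ b₁)
    (ha1 : 0 < a ⟨0, by omega⟩) (hai : ∀ i : Fin k, i ≠ ⟨0, by omega⟩ → 0 ≤ a i)
    (hrel0 : 4 * α₀ * a ⟨0, by omega⟩ = b₁ ^ 2)
    (hbL : 0 < b₁ - 2 * a ⟨0, by omega⟩ * L)
    (ψ : (Fin k → ℝ) → ℝ)
    (hψ : ψ = fun x => α₀ + (∑ i, a i * x i ^ 2) + b₁ * x ⟨0, by omega⟩) :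
    ∀ x : Fin k → ℝ, (∀ i, x i ∈ Set.Icc (-L) L) →
      ∀ i : Fin k, i ≠ ⟨0, by omega⟩ →
        (|fderiv ℝ (fun y => Real.sqrt (ψ y)) x (Pi.single (⟨0, by omega⟩ : Fin k) 1) *
            fderiv ℝ (fun y => Real.sqrt (ψ y)) x (Pi.single i 1)| =
          a i * |x i| * (2 * a ⟨0, by omega⟩ * x ⟨0, by omega⟩ + b₁) / (2 * ψ x)) ∧
        (|fderiv ℝ (fun y => Real.sqrt (ψ y)) x (Pi.single (⟨0, by omega⟩ : Fin k) 1) *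
            fderiv ℝ (fun y => Real.sqrt (ψ y)) x (Pi.single i 1)| ≤
          Real.sqrt (a ⟨0, by omega⟩ * a i) / 2) ∧
        ((∀ i' : Fin k, i' ≠ ⟨0, by omega⟩ →
            Real.sqrt (a ⟨0, by omega⟩) * Real.sqrt (a i') ≤ 2 * M) →
          |fderiv ℝ (fun y => Real.sqrt (ψ y)) x (Pi.single (⟨0, by omega⟩ : Fin k) 1) *
            fderiv ℝ (fun y => Real.sqrt (ψ y)) x (Pi.single i 1)| ≤ M) := by
  have hk0 : 0 < k := by omega
  intro x hx i hi
  set e0 : Fin k := ⟨0, hk0⟩ with he0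
  have hi' : i ≠ e0 := hi
  have ha1' : (0:ℝ) < a e0 := ha1
  have hai' : 0 ≤ a i := hai i hi
  have hx0 : -L ≤ x e0 := (hx e0).1
  set P : ℝ := 2 * a e0 * x e0 + b₁ with hPdef
  have hP : 0 < P := by nlinarith [hbL]
  -- lower bound for ψ x
  have hsum : a e0 * x e0 ^ 2 + a i * x i ^ 2 ≤ ∑ j, a j * x j ^ 2 := by
    have h2 : ∑ j ∈ ({e0, i} : Finset (Fin k)), a j * x j ^ 2
        = a e0 * x e0 ^ 2 + a i * x i ^ 2 := Finset.sum_pair (fun h => hi' h.symm)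
    rw [← h2]
    refine Finset.sum_le_sum_of_subset_of_nonneg (Finset.subset_univ _) ?_
    intro j _ hj
    have hj0 : j ≠ e0 := by simp only [Finset.mem_insert, Finset.mem_singleton] at hj; tauto
    exact mul_nonneg (hai j hj0) (sq_nonneg _)
  have hPsq : P ^ 2 = 4 * a e0 * (α₀ + a e0 * x e0 ^ 2 + b₁ * x e0) := by
    rw [hPdef]; linear_combination -hrel0
  have hψlb : P ^ 2 / (4 * a e0) + a i * x i ^ 2 ≤ ψ x := by
    rw [hψ]
    have : P ^ 2 / (4 * a e0) = α₀ + a e0 * x e0 ^ 2 + b₁ * x e0 := by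
      rw [hPsq]; field_simp
    rw [this]
    simp only []
    nlinarith [hsum]
  have hψpos : 0 < ψ x := by
    have h1 : 0 < P ^ 2 / (4 * a e0) := by positivity
    nlinarith [mul_nonneg hai' (sq_nonneg (x i))]
  -- the derivative of ψ
  set D : (Fin k → ℝ) →L[ℝ] ℝ :=
    (∑ j, (2 * a j * x j) • ContinuousLinearMap.proj (R := ℝ) (φ := fun _ : Fin k => ℝ) j)
      + b₁ • ContinuousLinearMap.proj (R := ℝ) (φ := fun _ : Fin k => ℝ) e0 with hDdef
  have hproj : ∀ j : Fin k, HasFDerivAt (fun y : Fin k → ℝ => y j)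
      (ContinuousLinearMap.proj (R := ℝ) (φ := fun _ : Fin k => ℝ) j) x :=
    fun j => hasFDerivAt_apply j x
  have hterm : ∀ j : Fin k, HasFDerivAt (fun y : Fin k → ℝ => a j * y j ^ 2)
      ((2 * a j * x j) • ContinuousLinearMap.proj (R := ℝ) (φ := fun _ : Fin k => ℝ) j) x := by
    intro j
    have h1 : HasDerivAt (fun t : ℝ => a j * t ^ 2) (2 * a j * x j) (x j) := by
      have := (hasDerivAt_pow 2 (x j)).const_mul (a j)
      exact this.congr_deriv (by norm_num; ring)
    have h2 := h1.comp_hasFDerivAt x (hproj j)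
    exact h2
  have hbd : HasFDerivAt (fun y : Fin k → ℝ => b₁ * y e0)
      (b₁ • ContinuousLinearMap.proj (R := ℝ) (φ := fun _ : Fin k => ℝ) e0) x := by
    have h1 : HasDerivAt (fun t : ℝ => b₁ * t) b₁ (x e0) := by
      simpa using (hasDerivAt_id (x e0)).const_mul b₁
    exact h1.comp_hasFDerivAt x (hproj e0)
  have hψD : HasFDerivAt ψ D x := by
    rw [hψ, hDdef]
    have hs := HasFDerivAt.fun_sum (fun j (_ : j ∈ Finset.univ) => hterm j)
    have := ((hasFDerivAt_const α₀ x).fun_add hs).fun_add hbd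
    simpa using this
  set s : ℝ := Real.sqrt (ψ x) with hsdef
  have hs0 : 0 < s := Real.sqrt_pos.mpr hψpos
  have hs2 : s ^ 2 = ψ x := Real.sq_sqrt hψpos.le
  have hsq : HasFDerivAt (fun y => Real.sqrt (ψ y)) ((1 / (2 * s)) • D) x :=
    (Real.hasDerivAt_sqrt (ne_of_gt hψpos)).comp_hasFDerivAt x hψD
  have hfd : fderiv ℝ (fun y => Real.sqrt (ψ y)) x = (1 / (2 * s)) • D := hsq.fderiv
  have hD0 : D (Pi.single e0 (1:ℝ)) = P := by
    rw [hDdef, hPdef]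
    simp [ContinuousLinearMap.sum_apply, Pi.single_apply]
  have hDi : D (Pi.single i (1:ℝ)) = 2 * a i * x i := by
    rw [hDdef]
    simp [ContinuousLinearMap.sum_apply, Pi.single_apply, (Ne.symm hi' : e0 ≠ i)]
  have hA : fderiv ℝ (fun y => Real.sqrt (ψ y)) x (Pi.single e0 (1:ℝ)) = 1 / (2 * s) * P := by
    rw [hfd]; simp [hD0]
  have hB : fderiv ℝ (fun y => Real.sqrt (ψ y)) x (Pi.single i (1:ℝ))
      = 1 / (2 * s) * (2 * a i * x i) := by
    rw [hfd]; simp [hDi]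
  -- the equality
  have heq : |fderiv ℝ (fun y => Real.sqrt (ψ y)) x (Pi.single e0 (1:ℝ)) *
      fderiv ℝ (fun y => Real.sqrt (ψ y)) x (Pi.single i 1)|
      = a i * |x i| * P / (2 * ψ x) := by
    rw [hA, hB]
    have hval : 1 / (2 * s) * P * (1 / (2 * s) * (2 * a i * x i))
        = a i * x i * P / (2 * ψ x) := by
      rw [← hs2]; field_simp
    rw [hval, abs_div, abs_of_pos (by linarith : (0:ℝ) < 2 * ψ x), abs_mul, abs_mul,
      abs_of_nonneg hai', abs_of_pos hP]
  clear hfd hsq hD0 hDi hA hB hψD hbd hproj hterm hψ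
  clear_value D
  clear D hDdef
  -- the bound
  have hψlb4 : P ^ 2 + 4 * a e0 * (a i * x i ^ 2) ≤ 4 * a e0 * ψ x := by
    have h4 := mul_le_mul_of_nonneg_left hψlb (by positivity : (0:ℝ) ≤ 4 * a e0)
    have h5 : 4 * a e0 * (P ^ 2 / (4 * a e0)) = P ^ 2 := by field_simp
    nlinarith [h4, h5]
  have hbound : a i * |x i| * P / (2 * ψ x) ≤ Real.sqrt (a e0 * a i) / 2 := by
    set r : ℝ := Real.sqrt (a e0 * a i) with hrdef
    have hr0 : 0 ≤ r := Real.sqrt_nonneg _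
    have hr2 : r ^ 2 = a e0 * a i := Real.sq_sqrt (by positivity)
    have habs : |x i| ^ 2 = x i ^ 2 := sq_abs _
    have hxabs : 0 ≤ |x i| := abs_nonneg _
    have hmain : a i * |x i| * P ≤ r * ψ x := by
      rcases eq_or_lt_of_le hai' with h0 | h0
      · rw [← h0]
        simpa using mul_nonneg hr0 hψpos.le
      · have hrpos : 0 < r := Real.sqrt_pos.mpr (by positivity)
        have e1 : r ^ 2 * P ^ 2 = a e0 * a i * P ^ 2 := by rw [hr2]
        have e2 : r ^ 2 * (4 * a e0 * (a i * |x i| ^ 2))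
            = a e0 * a i * (4 * a e0 * (a i * |x i| ^ 2)) := by rw [hr2]
        have step : 4 * a e0 * (a i * |x i| * P)
            ≤ r * (P ^ 2 + 4 * a e0 * (a i * |x i| ^ 2)) := by
          nlinarith [e1, e2, sq_nonneg (r * P - 2 * a e0 * a i * |x i|), hrpos, hP, hxabs,
            mul_pos hrpos hP]
        have h5 : r * (P ^ 2 + 4 * a e0 * (a i * |x i| ^ 2)) ≤ r * (4 * a e0 * ψ x) := by
          apply mul_le_mul_of_nonneg_left _ hr0
          rw [habs]; linarith [hψlb4]
        have h6 : 4 * a e0 * (a i * |x i| * P) ≤ 4 * a e0 * (r * ψ x) := by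
          nlinarith [step, h5]
        exact le_of_mul_le_mul_left h6 (by positivity)
    rw [div_le_div_iff₀ (by linarith) (by norm_num : (0:ℝ) < 2)]
    nlinarith [hmain]
  refine ⟨heq, heq ▸ hbound, ?_⟩
  intro hall
  rw [heq]
  have h2 : Real.sqrt (a e0 * a i) = Real.sqrt (a e0) * Real.sqrt (a i) :=
    Real.sqrt_mul ha1'.le _
  have := hall i hi
  calc a i * |x i| * P / (2 * ψ x) ≤ Real.sqrt (a e0 * a i) / 2 := hbound
    _ ≤ M := by rw [h2]; linarith
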